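/- Let P_{t+1} be the path u_0, u_1, ..., u_t and let c be a labeling of its vertices by certificates. If there exist indices 1 ≤ i < j ≤ t−1 with (c(u_i), c(u_{i+1})) = (c(u_j), c(u_{j+1})), then there exists a cycle (of length 3, 4, or j−i) and a labeling of its vertices such that every vertex of the cycle has the same labeled closed-neighborhood multiset of certificates as some internal vertex u_ℓ (1 ≤ ℓ ≤ t−1) of the path. -/
import Mathlib

lemma aux_mod1 (m a : ℕ) (ha : a < m + 2) :
    (a + (m + 1)) % (m + 2) = if a = 0 then m + 1 else a - 1 := by
  split
  · subst ‹a = 0›; rw [Nat.zero_add]; exact Nat.mod_eq_of_lt (by omega)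
  · have h : a + (m + 1) = (m + 2) + (a - 1) := by omega
    rw [h, Nat.add_mod_left, Nat.mod_eq_of_lt (by omega)]

lemma aux_mod2 (m a : ℕ) (ha : a < m + 2) :
    (a + 1) % (m + 2) = if a = m + 1 then 0 else a + 1 := by
  split
  · subst ‹a = m + 1›; simp
  · exact Nat.mod_eq_of_lt (by omega)

lemma aux_valsub (m : ℕ) (v : Fin (m + 2)) : (v - 1).val = (v.val + (m + 1)) % (m + 2) := by
  rw [Fin.sub_def]; simp [Nat.add_comm]

lemma aux_valadd (m : ℕ) (v : Fin (m + 2)) : (v + 1).val = (v.val + 1) % (m + 2) := by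
  rw [Fin.add_def]; simp

lemma aux_neigh (m : ℕ) (hm : 1 ≤ m) (v : Fin (m + 2)) :
    v - 1 ≠ v + 1 ∧ (SimpleGraph.cycleGraph (m + 2)).neighborSet v = {v - 1, v + 1} := by
  refine ⟨?_, SimpleGraph.cycleGraph_neighborSet⟩
  intro h
  have h' := congrArg Fin.val h
  rw [aux_valsub, aux_valadd, aux_mod1 m _ v.isLt, aux_mod2 m _ v.isLt] at h'
  have := v.isLt
  split at h' <;> split at h' <;> omega

theorem stmt_17 (t : ℕ) (C : Type) (c : Fin (t + 1) → C)
    (i j : ℕ) (hi : 1 ≤ i) (hij : i < j) (hj : j ≤ t - 1)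
    (h1 : c ⟨i, by omega⟩ = c ⟨j, by omega⟩)
    (h2 : c ⟨i + 1, by omega⟩ = c ⟨j + 1, by omega⟩) :
    ∃ (n : ℕ) (c' : Fin n → C), (n = 3 ∨ n = 4 ∨ n = j - i) ∧ 3 ≤ n ∧
      ∀ v : Fin n, ∃ (ℓ : ℕ) (hℓ₁ : 1 ≤ ℓ) (hℓ₂ : ℓ ≤ t - 1),
        c' v = c ⟨ℓ, by omega⟩ ∧
        ∃ w₁ w₂ : Fin n, w₁ ≠ w₂ ∧
          (SimpleGraph.cycleGraph n).neighborSet v = {w₁, w₂} ∧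
          ({c' w₁, c' w₂} : Multiset C) =
            {c ⟨ℓ - 1, by omega⟩, c ⟨ℓ + 1, by omega⟩} := by
  have ht : 2 ≤ t - 1 := by omega
  set d : ℕ → C := fun k => c ⟨k % (t + 1), Nat.mod_lt _ (by omega)⟩ with hd
  have key : ∀ (k : ℕ) (p : k < t + 1), c ⟨k, p⟩ = d k := by
    intro k p
    exact congrArg c (Fin.ext (by simp [Nat.mod_eq_of_lt p]))
  rw [key, key] at h1 h2
  -- h1 : d i = d j, h2 : d (i+1) = d (j+1)
  rcases eq_or_lt_of_le (Nat.succ_le_of_lt hij) with hji | hji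
  · -- j = i + 1 : triangle
    refine ⟨3, fun _ => d (i + 1), Or.inl rfl, by norm_num, fun v => ?_⟩
    refine ⟨i + 1, by omega, by omega, by rw [key], v - 1, v + 1,
      (aux_neigh 1 le_rfl v).1, (aux_neigh 1 le_rfl v).2, ?_⟩
    rw [key, key]
    have e1 : d i = d (i + 1) := by rw [h1, ← hji]
    have e2 : d (i + 1) = d (i + 1 + 1) := by rw [h2, ← hji]
    rw [Nat.add_sub_cancel, ← e1, ← e2, e1]
  · rcases eq_or_lt_of_le (Nat.succ_le_of_lt hji) with hji2 | hji2
    · -- j = i + 2 : square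
      have hj2 : j = i + 2 := by omega
      refine ⟨4, fun v => if v.val % 2 = 0 then d i else d (i + 1),
        Or.inr (Or.inl rfl), by norm_num, fun v => ?_⟩
      have hne := (aux_neigh 2 (by norm_num) v).1
      have hns := (aux_neigh 2 (by norm_num) v).2
      have e1 : d i = d (i + 2) := by rw [h1, ← hj2]
      have dc : ∀ a b : ℕ, a = b → d a = d b := fun a b h => by rw [h]
      have e2 : d (i + 1) = d (i + 3) := by rw [h2]; exact dc _ _ (by omega)
      fin_cases v
      · exact ⟨i + 2, by omega, by omega, by rw [key]; exact e1, _, _, hne, hns, by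
          show ({d (i+1), d (i+1)} : Multiset C) = _
          rw [key, key, show i + 2 - 1 = i + 1 from by omega, ← e2]⟩
      · exact ⟨i + 1, by omega, by omega, by rw [key]; norm_num, _, _, hne, hns, by
          show ({d i, d i} : Multiset C) = _
          rw [key, key, show i + 1 - 1 = i from by omega, ← e1]⟩
      · exact ⟨i + 2, by omega, by omega, by rw [key]; exact e1, _, _, hne, hns, by
          show ({d (i+1), d (i+1)} : Multiset C) = _
          rw [key, key, show i + 2 - 1 = i + 1 from by omega, ← e2]⟩
      · exact ⟨i + 1, by omega, by omega, by rw [key]; norm_num, _, _, hne, hns, by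
          show ({d i, d i} : Multiset C) = _
          rw [key, key, show i + 1 - 1 = i from by omega, ← e1]⟩
    · -- j ≥ i + 3 : cycle of length j - i
      obtain ⟨m, hm⟩ : ∃ m, j - i = m + 2 := ⟨j - i - 2, by omega⟩
      have hm1 : 1 ≤ m := by omega
      have hijm : j = i + m + 2 := by omega
      refine ⟨m + 2, fun v => d (i + v.val), Or.inr (Or.inr hm.symm), by omega, fun v => ?_⟩
      have hne := (aux_neigh m hm1 v).1
      have hns := (aux_neigh m hm1 v).2
      have hv := v.isLt
      have hw1 : (v - 1).val = if v.val = 0 then m + 1 else v.val - 1 := by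
        rw [aux_valsub, aux_mod1 m _ v.isLt]
      have hw2 : (v + 1).val = if v.val = m + 1 then 0 else v.val + 1 := by
        rw [aux_valadd, aux_mod2 m _ v.isLt]
      rcases Nat.eq_zero_or_pos v.val with hv0 | hv0
      · -- vertex 0, ℓ = j
        refine ⟨j, by omega, hj, ?_, v - 1, v + 1, hne, hns, ?_⟩
        · rw [key]; show d (i + v.val) = d j; rw [hv0, Nat.add_zero, h1]
        · rw [key, key]
          show ({d (i + (v-1).val), d (i + (v+1).val)} : Multiset C) = _
          rw [hw1, hw2, if_pos hv0, if_neg (by omega)]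
          rw [hv0]
          rw [show i + (m + 1) = j - 1 from by omega, show i + (0 + 1) = i + 1 from by omega, h2]
      · rcases eq_or_lt_of_le (Nat.succ_le_of_lt hv) with hvl | hvl
        · -- vertex m+1, ℓ = i + m + 1 = j - 1
          have hvv : v.val = m + 1 := by omega
          refine ⟨i + m + 1, by omega, by omega, ?_, v - 1, v + 1, hne, hns, ?_⟩
          · rw [key]; show d (i + v.val) = _; rw [hvv]; ring_nf
          · rw [key, key]
            show ({d (i + (v-1).val), d (i + (v+1).val)} : Multiset C) = _
            rw [hw1, hw2, if_neg (by omega), if_pos hvv]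
            rw [hvv, show i + (m + 1 - 1) = i + m + 1 - 1 from by omega,
              show i + 0 = i from rfl, h1, show j = i + m + 1 + 1 from by omega]
        · -- internal vertex
          have hvv : 1 ≤ v.val ∧ v.val ≤ m := by omega
          refine ⟨i + v.val, by omega, by omega, by rw [key], v - 1, v + 1, hne, hns, ?_⟩
          rw [key, key]
          show ({d (i + (v-1).val), d (i + (v+1).val)} : Multiset C) = _
          rw [hw1, hw2, if_neg (by omega), if_neg (by omega),
            show i + (v.val - 1) = i + v.val - 1 from by omega,
            show i + (v.val + 1) = i + v.val + 1 from by omega]
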